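/- Let n ≥ 10, let B = ((1/n²)·I_n + A)^{-1}, let R₁ > 0, and let x, z ∈ ℝ satisfy |x| ≤ R₁ and |z| ≤ R₁. Then the vector y* = B·b_{x,z}, where b_{x,z} = x·e₁ - (1/2)·z·e_n, satisfies |y*_i| ≤ 30·n·R₁ for every 1 ≤ i ≤ n. -/

import Mathlib

open Matrix Finset

/-- The `n × n` tridiagonal matrix with `A 1 1 = A n n = 1`, diagonal `2` otherwise,
off-diagonal entries `-1`, and all other entries `0` (0-indexed in Lean). -/
noncomputable def triA (n : ℕ) : Matrix (Fin n) (Fin n) ℝ :=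
  Matrix.of fun i j =>
    if i = j then (if (i : ℕ) = 0 ∨ (i : ℕ) = n - 1 then 1 else 2)
    else if (i : ℕ) + 1 = (j : ℕ) ∨ (j : ℕ) + 1 = (i : ℕ) then -1 else 0

/-- `B = (α I + A)⁻¹`. -/
noncomputable def Bmat (n : ℕ) (α : ℝ) : Matrix (Fin n) (Fin n) ℝ :=
  (α • (1 : Matrix (Fin n) (Fin n) ℝ) + triA n)⁻¹

/-- `b_{x,z} = x·e₁ - (1/2)·z·eₙ`. -/
noncomputable def bvec (n : ℕ) (x z : ℝ) : Fin n → ℝ := fun i =>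
  if (i : ℕ) = 0 then x else if (i : ℕ) = n - 1 then -(1 / 2) * z else 0

/-- ℕ-indexed mirror of the entries of `triA`. -/
noncomputable def aN (n : ℕ) (i j : ℕ) : ℝ :=
  if i = j then (if i = 0 ∨ i = n - 1 then 1 else 2)
  else if i + 1 = j ∨ j + 1 = i then -1 else 0

lemma triA_apply (n : ℕ) (i j : Fin n) : triA n i j = aN n (i : ℕ) (j : ℕ) := by
  simp only [triA, aN, Matrix.of_apply, Fin.ext_iff]

lemma row_sum (n : ℕ) (hn : 2 ≤ n) (V : ℕ → ℝ) (i : ℕ) (hi : i < n) :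
    ∑ j ∈ Finset.range n, aN n i j * V j
      = (if i = 0 ∨ i = n - 1 then 1 else 2) * V i
        - (if i = 0 then 0 else V (i - 1)) - (if i = n - 1 then 0 else V (i + 1)) := by
  have key : ∀ j ∈ Finset.range n, aN n i j * V j
      = (if j = i then (if i = 0 ∨ i = n - 1 then (1:ℝ) else 2) * V i else 0)
        + (if j = i + 1 then -V j else 0)
        + (if 1 ≤ i then (if j = i - 1 then -V j else 0) else 0) := by
    intro j hj
    simp only [Finset.mem_range] at hj
    unfold aN
    split_ifs <;> (try (exfalso; omega)) <;> subst_vars <;> first | ring1 | (exfalso; omega)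
  rw [Finset.sum_congr rfl key]
  rw [Finset.sum_add_distrib, Finset.sum_add_distrib]
  by_cases h1 : 1 ≤ i
  · simp only [if_pos h1]
    rw [Finset.sum_ite_eq' (Finset.range n) i, Finset.sum_ite_eq' (Finset.range n) (i+1),
      Finset.sum_ite_eq' (Finset.range n) (i-1)]
    simp only [Finset.mem_range]
    split_ifs <;> first | ring1 | (exfalso; omega)
  · simp only [if_neg h1, Finset.sum_const_zero]
    rw [Finset.sum_ite_eq' (Finset.range n) i, Finset.sum_ite_eq' (Finset.range n) (i+1)]
    simp only [Finset.mem_range]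
    split_ifs <;> first | ring1 | (exfalso; omega)

lemma quadN (n : ℕ) (hn : 2 ≤ n) (V : ℕ → ℝ) :
    ∑ i ∈ Finset.range n, V i * ∑ j ∈ Finset.range n, aN n i j * V j
      = ∑ k ∈ Finset.range (n - 1), (V (k + 1) - V k) ^ 2 := by
  obtain ⟨m, hm⟩ : ∃ m, n = m + 1 := ⟨n - 1, by omega⟩
  have hm1 : 1 ≤ m := by omega
  have hmn : n - 1 = m := by omega
  have step : ∀ i ∈ Finset.range n, V i * ∑ j ∈ Finset.range n, aN n i j * V j
      = ((if i = n - 1 then 0 else V i ^ 2) + (if 1 ≤ i then V i ^ 2 else 0))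
        - (if 1 ≤ i then V i * V (i - 1) else 0)
        - (if i = n - 1 then 0 else V i * V (i + 1)) := by
    intro i hi
    simp only [Finset.mem_range] at hi
    rw [row_sum n hn V i hi]
    split_ifs <;> first | ring1 | (exfalso; omega)
  rw [Finset.sum_congr rfl step]
  simp only [Finset.sum_sub_distrib, Finset.sum_add_distrib]
  subst hm
  simp only [hmn] at *
  -- compute each piece
  have A1 : ∑ i ∈ Finset.range (m+1), (if i = m then (0:ℝ) else V i ^ 2)
      = ∑ k ∈ Finset.range m, V k ^ 2 := by
    rw [Finset.sum_range_succ]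
    simp
    exact Finset.sum_congr rfl (fun i hi => by
      simp only [Finset.mem_range] at hi
      simp [Nat.ne_of_lt hi])
  have A2 : ∑ i ∈ Finset.range (m+1), (if 1 ≤ i then V i ^ 2 else (0:ℝ))
      = ∑ k ∈ Finset.range m, V (k + 1) ^ 2 := by
    rw [Finset.sum_range_succ']
    simp
  have A3 : ∑ i ∈ Finset.range (m+1), (if 1 ≤ i then V i * V (i - 1) else (0:ℝ))
      = ∑ k ∈ Finset.range m, V (k + 1) * V k := by
    rw [Finset.sum_range_succ']
    simp
  have A4 : ∑ i ∈ Finset.range (m+1), (if i = m then (0:ℝ) else V i * V (i + 1))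
      = ∑ k ∈ Finset.range m, V k * V (k + 1) := by
    rw [Finset.sum_range_succ]
    simp
    exact Finset.sum_congr rfl (fun i hi => by
      simp only [Finset.mem_range] at hi
      simp [Nat.ne_of_lt hi])
  rw [A1, A2, A3, A4]
  rw [← Finset.sum_add_distrib, ← Finset.sum_sub_distrib, ← Finset.sum_sub_distrib]
  exact Finset.sum_congr rfl (fun k _ => by ring)

lemma dot_to_range (n : ℕ) (v w : Fin n → ℝ) :
    v ⬝ᵥ w = ∑ k ∈ Finset.range n,
      (if h : k < n then v ⟨k, h⟩ else 0) * (if h : k < n then w ⟨k, h⟩ else 0) := by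
  rw [dotProduct, ← Fin.sum_univ_eq_sum_range
    (fun k => (if h : k < n then v ⟨k, h⟩ else 0) * (if h : k < n then w ⟨k, h⟩ else 0)) n]
  exact Finset.sum_congr rfl (fun j _ => by simp [j.isLt])

lemma triA_mulVec_row (n : ℕ) (v : Fin n → ℝ) (i : Fin n) :
    ((triA n) *ᵥ v) i = ∑ j ∈ Finset.range n, aN n (i : ℕ) j *
      (if h : j < n then v ⟨j, h⟩ else 0) := by
  rw [Matrix.mulVec, dotProduct, ← Fin.sum_univ_eq_sum_range
    (fun j => aN n (i : ℕ) j * (if h : j < n then v ⟨j, h⟩ else 0)) n]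
  exact Finset.sum_congr rfl (fun j _ => by simp [j.isLt, triA_apply])

lemma triA_quad (n : ℕ) (hn : 2 ≤ n) (v : Fin n → ℝ) :
    v ⬝ᵥ ((triA n) *ᵥ v)
      = ∑ k ∈ Finset.range (n - 1),
          ((if h : k + 1 < n then v ⟨k + 1, h⟩ else 0)
            - (if h : k < n then v ⟨k, h⟩ else 0)) ^ 2 := by
  set V : ℕ → ℝ := fun k => if h : k < n then v ⟨k, h⟩ else 0 with hV
  have : v ⬝ᵥ ((triA n) *ᵥ v) = ∑ i ∈ Finset.range n, V i * ∑ j ∈ Finset.range n, aN n i j * V j := by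
    rw [dotProduct, ← Fin.sum_univ_eq_sum_range
      (fun i => V i * ∑ j ∈ Finset.range n, aN n i j * V j) n]
    refine Finset.sum_congr rfl (fun j _ => ?_)
    rw [triA_mulVec_row]
    simp [hV, j.isLt]
  rw [this, quadN n hn V]

lemma triA_quad_nonneg (n : ℕ) (hn : 2 ≤ n) (v : Fin n → ℝ) :
    0 ≤ v ⬝ᵥ ((triA n) *ᵥ v) := by
  rw [triA_quad n hn v]
  exact Finset.sum_nonneg (fun k _ => sq_nonneg _)

lemma triA_isSymm (n : ℕ) : (triA n)ᵀ = triA n := by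
  ext i j
  simp only [Matrix.transpose_apply, triA, Matrix.of_apply]
  by_cases h : i = j
  · simp [h]
  · have h' : ¬ (j = i) := fun hh => h hh.symm
    simp only [h, h', if_false]
    by_cases h2 : (j : ℕ) + 1 = (i : ℕ) ∨ (i : ℕ) + 1 = (j : ℕ)
    · have h3 : (i : ℕ) + 1 = (j : ℕ) ∨ (j : ℕ) + 1 = (i : ℕ) := h2.symm
      simp [h2, h3]
    · have h3 : ¬ ((i : ℕ) + 1 = (j : ℕ) ∨ (j : ℕ) + 1 = (i : ℕ)) := fun hh => h2 hh.symm
      simp [h2, h3]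

lemma Mmat_posDef (n : ℕ) (hn : 2 ≤ n) {α : ℝ} (hα : 0 < α) :
    (α • (1 : Matrix (Fin n) (Fin n) ℝ) + triA n).PosDef := by
  rw [Matrix.posDef_iff_dotProduct_mulVec]
  constructor
  · -- IsHermitian
    have h1 : (α • (1 : Matrix (Fin n) (Fin n) ℝ) + triA n)ᵀ
        = α • (1 : Matrix (Fin n) (Fin n) ℝ) + triA n := by
      rw [Matrix.transpose_add, Matrix.transpose_smul, Matrix.transpose_one, triA_isSymm]
    rw [Matrix.IsHermitian, Matrix.conjTranspose_eq_transpose_of_trivial]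
    exact h1
  · intro v hv
    have hst : star v = v := by
      funext k; simp
    rw [hst, Matrix.add_mulVec, dotProduct_add, Matrix.smul_mulVec,
      Matrix.one_mulVec, dotProduct_smul]
    have h1 : 0 < v ⬝ᵥ v := by
      obtain ⟨k, hk⟩ := Function.ne_iff.mp hv
      have hpos : 0 < v k * v k := mul_self_pos.mpr hk
      have : 0 < ∑ j : Fin n, v j * v j :=
        Finset.sum_pos' (fun j _ => mul_self_nonneg _) ⟨k, Finset.mem_univ k, hpos⟩
      simpa [dotProduct] using this
    have h2 := triA_quad_nonneg n hn v
    have : 0 < α * (v ⬝ᵥ v) := mul_pos hα h1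
    simp only [smul_eq_mul]
    linarith

lemma key_bound (n : ℕ) (hn : 10 ≤ n) (R1 x z : ℝ) (hR1 : 0 < R1)
    (hx : |x| ≤ R1) (hz : |z| ≤ R1) (Y : ℕ → ℝ)
    (henergy : ((n : ℝ) ^ 2)⁻¹ * (∑ k ∈ Finset.range n, Y k * Y k)
        + ∑ k ∈ Finset.range (n - 1), (Y (k + 1) - Y k) ^ 2
      = x * Y 0 - (1 / 2) * z * Y (n - 1))
    (i : ℕ) (hi : i < n) : |Y i| ≤ 30 * n * R1 := by
  have hN0 : (0:ℝ) < (n:ℝ) := by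
    have : (0:ℕ) < n := by omega
    exact_mod_cast this
  set S2 : ℝ := ∑ k ∈ Finset.range n, Y k * Y k with hS2def
  set D : ℝ := ∑ k ∈ Finset.range (n - 1), (Y (k + 1) - Y k) ^ 2 with hDdef
  have h0mem : (0:ℕ) ∈ Finset.range n := by simp; omega
  have hn1mem : n - 1 ∈ Finset.range n := by simp; omega
  obtain ⟨j, hjmem, hjmax⟩ := Finset.exists_max_image (Finset.range n)
    (fun k => |Y k|) ⟨0, h0mem⟩
  obtain ⟨p, hpmem, hpmin⟩ := Finset.exists_min_image (Finset.range n)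
    (fun k => |Y k|) ⟨0, h0mem⟩
  set T : ℝ := |Y j| with hTdef
  set m : ℝ := |Y p| with hmdef
  set s : ℝ := ∑ k ∈ Finset.range (n - 1), |Y (k + 1) - Y k| with hsdef
  have hTnn : 0 ≤ T := abs_nonneg _
  have hmnn : 0 ≤ m := abs_nonneg _
  have hsnn : 0 ≤ s := by
    rw [hsdef]; exact Finset.sum_nonneg fun _ _ => abs_nonneg _
  have hS2nn : 0 ≤ S2 := by
    rw [hS2def]; exact Finset.sum_nonneg fun k _ => mul_self_nonneg _
  have hDnn : 0 ≤ D := by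
    rw [hDdef]; exact Finset.sum_nonneg fun k _ => sq_nonneg _
  -- n * m^2 ≤ S2
  clear_value S2 D T m s
  have hmS : (n : ℝ) * m ^ 2 ≤ S2 := by
    have hpt : ∀ k ∈ Finset.range n, m ^ 2 ≤ Y k * Y k := by
      intro k hk
      have h1 : |Y p| ≤ |Y k| := by rw [← hmdef]; exact hpmin k hk
      rw [hmdef]
      nlinarith [abs_nonneg (Y p), sq_abs (Y k), sq_abs (Y p)]
    have := Finset.card_nsmul_le_sum (Finset.range n) (fun k => Y k * Y k) (m ^ 2) hpt
    rw [hS2def]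
    simpa [nsmul_eq_mul] using this
  -- s^2 ≤ n * D
  have hs2 : s ^ 2 ≤ (n : ℝ) * D := by
    rw [hsdef]
    have h1 : (∑ k ∈ Finset.range (n - 1), |Y (k + 1) - Y k|) ^ 2 ≤ ((n - 1 : ℕ) : ℝ) * ∑ k ∈ Finset.range (n - 1), |Y (k + 1) - Y k| ^ 2 := by
      have := sq_sum_le_card_mul_sum_sq (s := Finset.range (n - 1))
        (f := fun k => |Y (k + 1) - Y k|)
      simpa using this
    have h2 : ∑ k ∈ Finset.range (n - 1), |Y (k + 1) - Y k| ^ 2 = D := by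
      rw [hDdef]
      exact Finset.sum_congr rfl fun k _ => sq_abs _
    rw [h2] at h1
    have h3 : ((n - 1 : ℕ) : ℝ) ≤ (n : ℝ) := by
      have : n - 1 ≤ n := by omega
      exact_mod_cast this
    nlinarith
  -- telescoping
  have tel : ∀ a b : ℕ, a ≤ b → b < n → |Y b - Y a| ≤ s := by
    intro a b hab hbn
    rw [hsdef]
    have h1 : Y b - Y a = ∑ k ∈ Finset.Ico a b, (Y (k + 1) - Y k) := by
      rw [Finset.sum_Ico_eq_sub _ hab, Finset.sum_range_sub, Finset.sum_range_sub]
      ring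
    rw [h1]
    calc |∑ k ∈ Finset.Ico a b, (Y (k + 1) - Y k)|
        ≤ ∑ k ∈ Finset.Ico a b, |Y (k + 1) - Y k| := Finset.abs_sum_le_sum_abs _ _
      _ ≤ ∑ k ∈ Finset.range (n - 1), |Y (k + 1) - Y k| := by
          apply Finset.sum_le_sum_of_subset_of_nonneg
          · intro k hk
            simp only [Finset.mem_Ico] at hk
            simp only [Finset.mem_range]
            omega
          · intro k _ _
            exact abs_nonneg _
  have hT : T ≤ m + s := by
    have habs : |Y j| - |Y p| ≤ |Y j - Y p| := abs_sub_abs_le_abs_sub _ _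
    have hds : |Y j - Y p| ≤ s := by
      rcases le_total p j with h | h
      · exact tel p j h (Finset.mem_range.mp hjmem)
      · rw [abs_sub_comm]
        exact tel j p h (Finset.mem_range.mp hpmem)
    simp only [hTdef, hmdef]
    linarith
  have hY0T : |Y 0| ≤ T := hjmax 0 h0mem
  have hYn1T : |Y (n - 1)| ≤ T := hjmax (n - 1) hn1mem
  have hE_le : ((n : ℝ) ^ 2)⁻¹ * S2 + D ≤ (3 / 2) * R1 * T := by
    rw [henergy]
    have h1 : x * Y 0 ≤ R1 * T := by
      calc x * Y 0 ≤ |x * Y 0| := le_abs_self _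
        _ = |x| * |Y 0| := abs_mul _ _
        _ ≤ R1 * T := mul_le_mul hx hY0T (abs_nonneg _) (le_of_lt hR1)
    have h2 : -((1 / 2) * z * Y (n - 1)) ≤ (1 / 2) * (R1 * T) := by
      calc -((1 / 2) * z * Y (n - 1)) ≤ |(1 / 2) * z * Y (n - 1)| := neg_le_abs _
        _ = (1 / 2) * (|z| * |Y (n - 1)|) := by
            rw [abs_mul, abs_mul, abs_of_nonneg (by norm_num : (0:ℝ) ≤ 1 / 2)]
            ring
        _ ≤ (1 / 2) * (R1 * T) := by
            have : |z| * |Y (n - 1)| ≤ R1 * T :=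
              mul_le_mul hz hYn1T (abs_nonneg _) (le_of_lt hR1)
            linarith
    linarith
  have hinv : ((n : ℝ) ^ 2)⁻¹ * (n : ℝ) ^ 2 = 1 := inv_mul_cancel₀ (by positivity)
  have c1 : T ^ 2 ≤ 2 * m ^ 2 + 2 * s ^ 2 := by nlinarith [sq_nonneg (m - s)]
  have c2 : 2 * m ^ 2 ≤ 2 * (n : ℝ) * (((n : ℝ) ^ 2)⁻¹ * S2) := by
    have he : 2 * (n : ℝ) * (((n : ℝ) ^ 2)⁻¹ * S2) = 2 * S2 / (n : ℝ) := by
      field_simp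
    rw [he, le_div_iff₀ hN0]
    linarith
  have c3 : 2 * s ^ 2 ≤ 2 * (n : ℝ) * D := by linarith
  have c4 : 2 * (n : ℝ) * (((n : ℝ) ^ 2)⁻¹ * S2) + 2 * (n : ℝ) * D
      ≤ 2 * (n : ℝ) * ((3 / 2) * R1 * T) := by
    have h2n : (0:ℝ) ≤ 2 * (n : ℝ) := by linarith
    have := mul_le_mul_of_nonneg_left hE_le h2n
    linarith [this]
  have c5 : T ^ 2 ≤ 3 * (n : ℝ) * R1 * T := by linarith [c1, c2, c3, c4]
  have hTle : T ≤ 3 * (n : ℝ) * R1 := by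
    rcases eq_or_lt_of_le hTnn with h | h
    · rw [← h]
      positivity
    · have c5' : T * T ≤ 3 * (n : ℝ) * R1 * T := by
        have : T ^ 2 = T * T := sq T
        linarith [c5, this.symm.le, this.le]
      exact le_of_mul_le_mul_right c5' h
  have hiT : |Y i| ≤ T := hjmax i (Finset.mem_range.mpr hi)
  have h30 : 3 * (n : ℝ) * R1 ≤ 30 * (n : ℝ) * R1 := by
    have : (0:ℝ) ≤ 27 * (n : ℝ) * R1 := by positivity
    linarith
  linarith

/-- for `n ≥ 10`, `|x|, |z| ≤ R₁`, every coordinate of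
`y* = B b_{x,z}` satisfies `|y*ᵢ| ≤ 30 n R₁`. -/
theorem stmt_12 (n : ℕ) (hn : 10 ≤ n) (R1 : ℝ) (hR1 : 0 < R1)
    (x z : ℝ) (hx : |x| ≤ R1) (hz : |z| ≤ R1) (i : Fin n) :
    |(Bmat n (((n : ℝ) ^ 2)⁻¹)).mulVec (bvec n x z) i| ≤ 30 * n * R1 := by
  have hn2 : 2 ≤ n := by omega
  set α : ℝ := ((n : ℝ) ^ 2)⁻¹ with hαdef
  have hN0 : (0:ℝ) < (n:ℝ) := by
    have : (0:ℕ) < n := by omega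
    exact_mod_cast this
  have hα : 0 < α := by rw [hαdef]; positivity
  set Mm : Matrix (Fin n) (Fin n) ℝ := α • (1 : Matrix (Fin n) (Fin n) ℝ) + triA n with hMdef
  have hpd : Mm.PosDef := Mmat_posDef n hn2 hα
  have hdet : IsUnit Mm.det := isUnit_iff_ne_zero.mpr (ne_of_gt hpd.det_pos)
  set b : Fin n → ℝ := bvec n x z with hbdef
  set y : Fin n → ℝ := (Bmat n α).mulVec b with hydef
  have hMy : Mm *ᵥ y = b := by
    rw [hydef]
    have hB : Bmat n α = Mm⁻¹ := rfl
    rw [hB]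
    show Mm *ᵥ (Mm⁻¹ *ᵥ b) = b
    rw [Matrix.mulVec_mulVec, Matrix.mul_nonsing_inv Mm hdet, Matrix.one_mulVec]
  -- the ℕ-indexed version of y
  have henergy : α * (∑ k ∈ Finset.range n,
        (if h : k < n then y ⟨k, h⟩ else 0) * (if h : k < n then y ⟨k, h⟩ else 0))
      + ∑ k ∈ Finset.range (n - 1),
          ((if h : k + 1 < n then y ⟨k + 1, h⟩ else 0)
            - (if h : k < n then y ⟨k, h⟩ else 0)) ^ 2
      = x * (if h : (0:ℕ) < n then y ⟨0, h⟩ else 0)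
        - (1 / 2) * z * (if h : n - 1 < n then y ⟨n - 1, h⟩ else 0) := by
    have e1 : y ⬝ᵥ (Mm *ᵥ y) = y ⬝ᵥ b := by rw [hMy]
    have e2 : y ⬝ᵥ (Mm *ᵥ y) = α * (∑ k ∈ Finset.range n,
          (if h : k < n then y ⟨k, h⟩ else 0) * (if h : k < n then y ⟨k, h⟩ else 0))
        + ∑ k ∈ Finset.range (n - 1),
            ((if h : k + 1 < n then y ⟨k + 1, h⟩ else 0)
              - (if h : k < n then y ⟨k, h⟩ else 0)) ^ 2 := by
      rw [hMdef, Matrix.add_mulVec, dotProduct_add, Matrix.smul_mulVec,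
        Matrix.one_mulVec, dotProduct_smul, smul_eq_mul,
        triA_quad n hn2 y, dot_to_range n y y]
    have e3 : y ⬝ᵥ b = x * (if h : (0:ℕ) < n then y ⟨0, h⟩ else 0)
        - (1 / 2) * z * (if h : n - 1 < n then y ⟨n - 1, h⟩ else 0) := by
      rw [dot_to_range n y b]
      have key : ∀ k ∈ Finset.range n,
          (if h : k < n then y ⟨k, h⟩ else 0) * (if h : k < n then b ⟨k, h⟩ else 0)
          = (if k = 0 then (if h : (0:ℕ) < n then y ⟨0, h⟩ else 0) * x else 0)
            + (if k = n - 1 then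
                (if h : n - 1 < n then y ⟨n - 1, h⟩ else 0) * (-(1 / 2) * z) else 0) := by
        intro k hk
        simp only [Finset.mem_range] at hk
        have hb : b ⟨k, hk⟩ = if k = 0 then x else if k = n - 1 then -(1 / 2) * z else 0 := by
          rw [hbdef]
          simp [bvec]
        rw [dif_pos hk, dif_pos hk, hb]
        by_cases h0 : k = 0
        · subst h0
          have hne : (0:ℕ) ≠ n - 1 := by omega
          simp [hne, hk]
        · by_cases h1 : k = n - 1
          · subst h1
            simp [h0, Nat.sub_lt (by omega : 0 < n) one_pos]
          · simp [h0, h1]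
      rw [Finset.sum_congr rfl key, Finset.sum_add_distrib,
        Finset.sum_ite_eq' (Finset.range n) 0, Finset.sum_ite_eq' (Finset.range n) (n - 1)]
      have h0mem : (0:ℕ) ∈ Finset.range n := by simp; omega
      have hn1mem : n - 1 ∈ Finset.range n := by simp; omega
      rw [if_pos h0mem, if_pos hn1mem]
      ring
    rw [← e2, e1, e3]
  have := key_bound n hn R1 x z hR1 hx hz
    (fun k => if h : k < n then y ⟨k, h⟩ else 0) henergy (i : ℕ) i.isLt
  simpa [i.isLt] using this
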